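/- Let ψ(p) = (p-a)^{-α} near a and (b-p)^{-β} near b with min(α,β) > 0 and b < ∞; then as δ → 0+, the fundamental function satisfies φ(G(a,b;α,β), δ) ∼ (βb²/e)^β · δ^{1/b} · |log δ|^{-β}. -/

import Mathlib

open Set Filter

/-- Key scalar inequality behind the upper bound for the fundamental function. -/
private lemma key_ineq (b β L p : ℝ) (hb : 0 < b) (hβ : 0 < β) (hL : 0 < L)
    (hp : 0 < p) (hpb : p < b) :
    -(L / p) + β * Real.log (b - p) ≤
      β * Real.log (β * b ^ 2) - β - L / b - β * Real.log L := by
  set t := b - p with ht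
  have ht0 : 0 < t := sub_pos.mpr hpb
  have h1 : L / b + L * t / b ^ 2 ≤ L / p := by
    rw [div_add_div _ _ hb.ne' (by positivity), div_le_div_iff₀ (by positivity) hp]
    have hpt : p = b - t := by rw [ht]; ring
    rw [hpt]
    nlinarith [mul_nonneg (mul_nonneg hL.le hb.le) (sq_nonneg t)]
  have hx : (0 : ℝ) < t * L / (β * b ^ 2) := by positivity
  have hlog := Real.log_le_sub_one_of_pos hx
  rw [Real.log_div (by positivity) (by positivity), Real.log_mul ht0.ne' hL.ne'] at hlog
  have hb2 : β * (t * L / (β * b ^ 2)) = L * t / b ^ 2 := by field_simp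
  nlinarith [mul_le_mul_of_nonneg_left hlog hβ.le]

/-- Pointwise upper bound: each candidate value on the right branch is below the target. -/
private lemma point_ub (b β δ p : ℝ) (hb : 0 < b) (hβ : 0 < β) (hδ0 : 0 < δ)
    (hδ1 : δ < 1) (hp : 0 < p) (hpb : p < b) :
    δ ^ (1 / p) * (b - p) ^ β ≤
      (β * b ^ 2 / Real.exp 1) ^ β * δ ^ (1 / b) * (-Real.log δ) ^ (-β) := by
  have hL : 0 < -Real.log δ := neg_pos.mpr (Real.log_neg hδ0 hδ1)
  rw [Real.rpow_def_of_pos hδ0 (1 / p), Real.rpow_def_of_pos hδ0 (1 / b),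
    Real.rpow_def_of_pos (sub_pos.mpr hpb) β,
    Real.rpow_def_of_pos (by positivity : (0:ℝ) < β * b ^ 2 / Real.exp 1) β,
    Real.rpow_def_of_pos hL (-β), ← Real.exp_add, ← Real.exp_add, ← Real.exp_add,
    Real.exp_le_exp, Real.log_div (by positivity) (Real.exp_pos 1).ne', Real.log_exp]
  have hk := key_ineq b β (-Real.log δ) p hb hβ hL hp hpb
  have hld : Real.log δ = -(-Real.log δ) := (neg_neg _).symm
  rw [hld]
  have hcomm : β * Real.log (b ^ 2 * β) = β * Real.log (β * b ^ 2) := by rw [mul_comm (b ^ 2) β]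
  ring_nf
  ring_nf at hk
  linarith [hcomm]

/-- Exact value of the candidate at the (near-)optimal point `p = b - βb²/L`. -/
private lemma point_eq (b β δ : ℝ) (hb : 0 < b) (hβ : 0 < β) (hδ0 : 0 < δ)
    (hδ1 : δ < 1) (htb : β * b ^ 2 / (-Real.log δ) < b) :
    δ ^ (1 / (b - β * b ^ 2 / (-Real.log δ))) * (β * b ^ 2 / (-Real.log δ)) ^ β
      = Real.exp (β * (1 - b / (b - β * b ^ 2 / (-Real.log δ)))) *
        ((β * b ^ 2 / Real.exp 1) ^ β * δ ^ (1 / b) * (-Real.log δ) ^ (-β)) := by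
  have hL : 0 < -Real.log δ := neg_pos.mpr (Real.log_neg hδ0 hδ1)
  have hP : 0 < b - β * b ^ 2 / (-Real.log δ) := sub_pos.mpr htb
  have ht0 : 0 < β * b ^ 2 / (-Real.log δ) := by positivity
  rw [Real.rpow_def_of_pos hδ0, Real.rpow_def_of_pos hδ0,
    Real.rpow_def_of_pos ht0 β,
    Real.rpow_def_of_pos (by positivity : (0:ℝ) < β * b ^ 2 / Real.exp 1) β,
    Real.rpow_def_of_pos hL (-β), ← Real.exp_add, ← Real.exp_add, ← Real.exp_add,
    ← Real.exp_add, Real.exp_eq_exp,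
    Real.log_div (by positivity) hL.ne',
    Real.log_div (by positivity) (Real.exp_pos 1).ne', Real.log_exp]
  have hld : Real.log δ = -(-Real.log δ) := (neg_neg _).symm
  have hbl : β * b ^ 2 < b * (-Real.log δ) := (div_lt_iff₀ hL).mp htb
  have hden : -(Real.log δ * b) - b ^ 2 * β ≠ 0 := by nlinarith
  have hden2 : b * (-Real.log δ) - β * b ^ 2 ≠ 0 := by nlinarith
  rw [hld]
  field_simp [hden, hden2]
  have hDD : (-(Real.log δ * b) - b ^ 2 * β) * (-(Real.log δ * b) - b ^ 2 * β)⁻¹ = 1 :=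
    mul_inv_cancel₀ hden
  have hlne : Real.log δ ≠ 0 := by linarith
  have hsum : Real.log δ + b * β ≠ 0 := by nlinarith
  have hD : 1 - -(b * β / Real.log δ) = (Real.log δ + b * β) / Real.log δ := by
    field_simp; ring
  rw [hD]
  field_simp
  ring

/-- Asymptotics of the fundamental function of `G(a,b;α,β)` as `δ → 0+`:
`φ(δ) ∼ (β b²/e)^β δ^{1/b} |log δ|^{-β}`. -/
theorem fundamental_function_asymptotics (a b α β : ℝ) (ha : 1 ≤ a) (hab : a < b)
    (hα : 0 < α) (hβ : 0 < β)
    (h : ℝ) (hh : h ∈ Set.Ioo a b) (hroot : (h - a) ^ α = (b - h) ^ β)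
    (ζ : ℝ → ℝ) (hζ : ∀ p, ζ p = if p < h then (p - a) ^ α else (b - p) ^ β)
    (φ : ℝ → ℝ)
    (hφ : ∀ δ > (0 : ℝ),
      IsLUB {y | ∃ p ∈ Set.Ioo a b, y = δ ^ (1 / p) * ζ p} (φ δ)) :
    Tendsto
      (fun δ : ℝ =>
        φ δ / ((β * b ^ 2 / Real.exp 1) ^ β * δ ^ (1 / b) * |Real.log δ| ^ (-β)))
      (nhdsWithin 0 (Set.Ioi 0)) (nhds 1) := by
  have ha0 : (0:ℝ) < a := lt_of_lt_of_le zero_lt_one ha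
  obtain ⟨hah, hhb⟩ := hh
  have hb0 : 0 < b := ha0.trans hab
  have hh0 : 0 < h := ha0.trans hah
  have hbh : 0 < b - h := sub_pos.mpr hhb
  have hC : 0 < (β * b ^ 2 / Real.exp 1) ^ β := Real.rpow_pos_of_pos (by positivity) β
  have hc : 0 < 1 / h - 1 / b := by
    rw [sub_pos]; exact one_div_lt_one_div_of_lt hh0 hhb
  -- L(δ) = -log δ → ∞
  have tL : Tendsto (fun δ : ℝ => -Real.log δ) (nhdsWithin 0 (Set.Ioi 0)) atTop :=
    tendsto_neg_atBot_atTop.comp Real.tendsto_log_nhdsGT_zero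
  -- p*(δ) → b
  have tP : Tendsto (fun δ : ℝ => b - β * b ^ 2 / (-Real.log δ))
      (nhdsWithin 0 (Set.Ioi 0)) (nhds b) := by
    have h1 : Tendsto (fun δ : ℝ => β * b ^ 2 / (-Real.log δ))
        (nhdsWithin 0 (Set.Ioi 0)) (nhds 0) := tendsto_const_nhds.div_atTop tL
    simpa using tendsto_const_nhds.sub h1
  -- lower comparison function tends to 1
  have tlo : Tendsto
      (fun δ : ℝ => Real.exp (β * (1 - b / (b - β * b ^ 2 / (-Real.log δ)))))
      (nhdsWithin 0 (Set.Ioi 0)) (nhds 1) := by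
    have h1 : Tendsto (fun δ : ℝ => β * (1 - b / (b - β * b ^ 2 / (-Real.log δ))))
        (nhdsWithin 0 (Set.Ioi 0)) (nhds 0) := by
      have h2 : Tendsto (fun δ : ℝ => b / (b - β * b ^ 2 / (-Real.log δ)))
          (nhdsWithin 0 (Set.Ioi 0)) (nhds 1) := by
        have := (tendsto_const_nhds (x := b)).div tP hb0.ne'
        rw [div_self hb0.ne'] at this
        exact this
      have := (tendsto_const_nhds (x := (1:ℝ))).sub h2
      simpa using (this.const_mul β)
    have := (Real.continuous_exp.tendsto 0).comp h1
    rw [Real.exp_zero] at this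
    exact this
  -- upper comparison function tends to 1
  have thi : Tendsto
      (fun δ : ℝ => max ((b - a) ^ α / (β * b ^ 2 / Real.exp 1) ^ β *
        ((-Real.log δ) ^ β * Real.exp (-(1 / h - 1 / b) * (-Real.log δ)))) 1)
      (nhdsWithin 0 (Set.Ioi 0)) (nhds 1) := by
    have h1 : Tendsto (fun x : ℝ => x ^ β * Real.exp (-(1 / h - 1 / b) * x))
        atTop (nhds 0) := tendsto_rpow_mul_exp_neg_mul_atTop_nhds_zero β _ hc
    have h2 := ((h1.comp tL).const_mul ((b - a) ^ α / (β * b ^ 2 / Real.exp 1) ^ β))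
    have h3 := h2.max (tendsto_const_nhds (x := (1:ℝ)))
    simpa using h3
  refine tendsto_of_tendsto_of_tendsto_of_le_of_le' tlo thi ?_ ?_
  · -- eventually: lo δ ≤ φ δ / T δ
    filter_upwards [self_mem_nhdsWithin,
      Ioo_mem_nhdsGT_of_mem (Set.mem_Ico.mpr ⟨le_refl (0:ℝ), zero_lt_one⟩),
      tL.eventually_gt_atTop (β * b ^ 2 / (b - h)),
      tL.eventually_gt_atTop 0] with δ hδ0 hδ1 hLbig hL0
    have hδ0' : (0:ℝ) < δ := hδ0
    have hδ1' : δ < 1 := hδ1.2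
    have habs : |Real.log δ| = -Real.log δ := abs_of_neg (Real.log_neg hδ0' hδ1')
    have hT0 : 0 < (β * b ^ 2 / Real.exp 1) ^ β * δ ^ (1 / b) * |Real.log δ| ^ (-β) := by
      rw [habs]
      exact mul_pos (mul_pos hC (Real.rpow_pos_of_pos hδ0' _)) (Real.rpow_pos_of_pos hL0 _)
    -- the near-optimal point
    have ht0 : 0 < β * b ^ 2 / (-Real.log δ) := by positivity
    have htsm : β * b ^ 2 / (-Real.log δ) < b - h := by
      rw [div_lt_iff₀ hL0]
      have h2 := (div_lt_iff₀ hbh).mp hLbig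
      nlinarith
    have htb : β * b ^ 2 / (-Real.log δ) < b := htsm.trans (by linarith)
    have hPh : h < b - β * b ^ 2 / (-Real.log δ) := by linarith
    have hPmem : b - β * b ^ 2 / (-Real.log δ) ∈ Set.Ioo a b :=
      ⟨hah.trans hPh, by linarith⟩
    have hmem : δ ^ (1 / (b - β * b ^ 2 / (-Real.log δ))) *
        ζ (b - β * b ^ 2 / (-Real.log δ)) ∈
        {y | ∃ p ∈ Set.Ioo a b, y = δ ^ (1 / p) * ζ p} :=
      ⟨_, hPmem, rfl⟩
    have hle := (hφ δ hδ0').1 hmem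
    rw [hζ, if_neg (not_lt.mpr hPh.le)] at hle
    have hbb : b - (b - β * b ^ 2 / (-Real.log δ)) = β * b ^ 2 / (-Real.log δ) := by ring
    rw [hbb, point_eq b β δ hb0 hβ hδ0' hδ1' htb] at hle
    rw [le_div_iff₀ hT0, habs]
    exact hle
  · -- eventually: φ δ / T δ ≤ hi δ
    filter_upwards [self_mem_nhdsWithin,
      Ioo_mem_nhdsGT_of_mem (Set.mem_Ico.mpr ⟨le_refl (0:ℝ), zero_lt_one⟩),
      tL.eventually_gt_atTop 0] with δ hδ0 hδ1 hL0
    have hδ0' : (0:ℝ) < δ := hδ0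
    have hδ1' : δ < 1 := hδ1.2
    have habs : |Real.log δ| = -Real.log δ := abs_of_neg (Real.log_neg hδ0' hδ1')
    have hT0 : 0 < (β * b ^ 2 / Real.exp 1) ^ β * δ ^ (1 / b) * |Real.log δ| ^ (-β) := by
      rw [habs]
      exact mul_pos (mul_pos hC (Real.rpow_pos_of_pos hδ0' _)) (Real.rpow_pos_of_pos hL0 _)
    -- φ δ ≤ max B T
    have hub : φ δ ≤ max ((b - a) ^ α * δ ^ (1 / h))
        ((β * b ^ 2 / Real.exp 1) ^ β * δ ^ (1 / b) * |Real.log δ| ^ (-β)) := by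
      apply (hφ δ hδ0').2
      rintro y ⟨p, hp, rfl⟩
      rw [hζ]
      by_cases hcase : p < h
      · rw [if_pos hcase]
        refine le_max_of_le_left ?_
        have hp0 : 0 < p := ha0.trans hp.1
        have h1 : δ ^ (1 / p) ≤ δ ^ (1 / h) :=
          Real.rpow_le_rpow_of_exponent_ge hδ0' hδ1'.le
            (one_div_le_one_div_of_le hp0 hcase.le)
        have h2 : (p - a) ^ α ≤ (b - a) ^ α :=
          Real.rpow_le_rpow (sub_nonneg.mpr hp.1.le)
            (sub_le_sub_right hp.2.le a) hα.le
        calc δ ^ (1 / p) * (p - a) ^ α ≤ δ ^ (1 / h) * (b - a) ^ α :=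
              mul_le_mul h1 h2 (Real.rpow_nonneg (sub_nonneg.mpr hp.1.le) α)
                (Real.rpow_nonneg hδ0'.le _)
          _ = (b - a) ^ α * δ ^ (1 / h) := mul_comm _ _
      · rw [if_neg hcase]
        refine le_max_of_le_right ?_
        rw [habs]
        exact point_ub b β δ p hb0 hβ hδ0' hδ1' (lt_of_lt_of_le hh0 (not_lt.mp hcase)) hp.2
    -- ratio equality for the left-branch bound
    have hratio : (b - a) ^ α * δ ^ (1 / h) /
        ((β * b ^ 2 / Real.exp 1) ^ β * δ ^ (1 / b) * (-Real.log δ) ^ (-β)) =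
        (b - a) ^ α / (β * b ^ 2 / Real.exp 1) ^ β *
          ((-Real.log δ) ^ β * Real.exp (-(1 / h - 1 / b) * (-Real.log δ))) := by
      have e1 : δ ^ (1 / h) = δ ^ (1 / b) * δ ^ (1 / h - 1 / b) := by
        rw [← Real.rpow_add hδ0']; ring_nf
      have e2 : δ ^ (1 / h - 1 / b) = Real.exp (-(1 / h - 1 / b) * (-Real.log δ)) := by
        rw [Real.rpow_def_of_pos hδ0']
        congr 1; ring
      have e3 : (-Real.log δ) ^ (-β) = ((-Real.log δ) ^ β)⁻¹ :=
        Real.rpow_neg hL0.le β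
      rw [e1, e2, e3]
      have hδb : (0:ℝ) < δ ^ (1 / b) := Real.rpow_pos_of_pos hδ0' _
      have hLβ : (0:ℝ) < (-Real.log δ) ^ β := Real.rpow_pos_of_pos hL0 _
      field_simp
    rw [habs] at hT0 ⊢
    rw [habs] at hub
    calc φ δ / ((β * b ^ 2 / Real.exp 1) ^ β * δ ^ (1 / b) * (-Real.log δ) ^ (-β))
        ≤ max ((b - a) ^ α * δ ^ (1 / h))
            ((β * b ^ 2 / Real.exp 1) ^ β * δ ^ (1 / b) * (-Real.log δ) ^ (-β)) /
          ((β * b ^ 2 / Real.exp 1) ^ β * δ ^ (1 / b) * (-Real.log δ) ^ (-β)) :=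
          (div_le_div_iff_of_pos_right hT0).mpr hub
      _ = max ((b - a) ^ α * δ ^ (1 / h) /
            ((β * b ^ 2 / Real.exp 1) ^ β * δ ^ (1 / b) * (-Real.log δ) ^ (-β))) 1 := by
          rw [← max_div_div_right hT0.le, div_self hT0.ne']
      _ = max ((b - a) ^ α / (β * b ^ 2 / Real.exp 1) ^ β *
            ((-Real.log δ) ^ β * Real.exp (-(1 / h - 1 / b) * (-Real.log δ)))) 1 := by
          rw [hratio]
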